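/- Let n ≥ 2 be an integer and let A > 0, B > 0. For all sufficiently small ε > 0 and δ > 0 the following holds. Set ρ_* = A/√ε, γ = δ + (1−δ)ε²/(ε + 2A²/(n−1)), a = (1−δ)(n−1)/4, Λ(r) = 1/(−log r), W₀(ρ) = ((n−1)/2)(1 + 2(n−1)/ρ²), and define v_out⁻(r,t) = aΛ(r) + (1−ε)·t·F[aΛ](r) and v_par⁻(r,t) = (1/(−log t))·[ (1−γ)W₀(r/√t) − B²/((−log t)·(r/√t)⁴) ]. Then there exists t_* ∈ (0, 1/e) such that for all 0 < t < t_*: v_par⁻(ρ_*√t, t) > v_out⁻(ρ_*√t, t) and v_par⁻(3ρ_*√t, t) < v_out⁻(3ρ_*√t, t). -/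

import Mathlib

open Real Set Filter

/-- The quasilinear operator `F[v](r) = v v'' - (1/2)(v')² + ((n-1-v)/r) v' + (2(n-1)/r²) v (1-v)`. -/
noncomputable def Fop (n : ℕ) (v : ℝ → ℝ) (r : ℝ) : ℝ :=
  v r * deriv (deriv v) r - (1/2) * (deriv v r)^2
    + (((n : ℝ) - 1 - v r) / r) * deriv v r
    + (2 * ((n : ℝ) - 1) / r^2) * v r * (1 - v r)

/-- `Λ(r) = 1/(-log r)`. -/
noncomputable def Lam (r : ℝ) : ℝ := 1 / (-Real.log r)

/-- The outer-region subsolution `v_out⁻(r,t) = aΛ(r) + (1-ε) t F[aΛ](r)`. -/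
noncomputable def vOuter (n : ℕ) (a b : ℝ) (r t : ℝ) : ℝ :=
  a * Lam r + b * t * Fop n (fun ρ => a * Lam ρ) r

/-- `W₀(ρ) = ((n-1)/2)(1 + 2(n-1)/ρ²)`. -/
noncomputable def W0 (n : ℕ) (ρ : ℝ) : ℝ :=
  (((n:ℝ) - 1) / 2) * (1 + 2 * ((n:ℝ) - 1) / ρ^2)

/-- The parabolic-region subsolution
`v_par⁻(r,t) = (1/(-log t))·[(1-γ)W₀(r/√t) - B²/((-log t)(r/√t)⁴)]`. -/
noncomputable def vParSub (n : ℕ) (γ B : ℝ) (r t : ℝ) : ℝ :=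
  (1 / (-Real.log t)) *
    ((1 - γ) * W0 n (r / Real.sqrt t) - B^2 / ((-Real.log t) * (r / Real.sqrt t)^4))

lemma lam_hasDeriv {r : ℝ} (h0 : 0 < r) (h1 : r < 1) :
    HasDerivAt Lam ((Lam r)^2 / r) r := by
  have hlr : Real.log r < 0 := Real.log_neg h0 h1
  have hne : -Real.log r ≠ 0 := by linarith
  have h2 : HasDerivAt (fun x => (-Real.log x)⁻¹) (-(-r⁻¹)/(-Real.log r)^2) r :=
    ((Real.hasDerivAt_log (ne_of_gt h0)).neg).inv hne
  have heq : (fun x => (-Real.log x)⁻¹) = Lam := by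
    funext x; simp [Lam, one_div]
  rw [heq] at h2
  convert h2 using 1
  rw [Lam]
  field_simp

lemma lam_deriv2 {r : ℝ} (h0 : 0 < r) (h1 : r < 1) :
    HasDerivAt (deriv Lam) ((2*(Lam r)^3 - (Lam r)^2)/r^2) r := by
  have h : HasDerivAt (fun x => (Lam x)^2 / x) ((2*(Lam r)^3 - (Lam r)^2)/r^2) r := by
    have hsq : HasDerivAt (fun x => (Lam x)^2) (2 * Lam r ^ 1 * ((Lam r)^2 / r)) r :=
      (lam_hasDeriv h0 h1).pow 2
    have := hsq.div (hasDerivAt_id r) (ne_of_gt h0)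
    refine this.congr_deriv ?_
    have hr : r ≠ 0 := ne_of_gt h0
    simp only [id]
    field_simp
  have hev : deriv Lam =ᶠ[nhds r] (fun x => (Lam x)^2 / x) := by
    filter_upwards [isOpen_Ioo.mem_nhds (show r ∈ Ioo (0:ℝ) 1 from ⟨h0, h1⟩)] with x hx
    exact (lam_hasDeriv hx.1 hx.2).deriv
  exact h.congr_of_eventuallyEq hev

lemma Fop_aLam (n : ℕ) (a : ℝ) {r : ℝ} (h0 : 0 < r) (h1 : r < 1) :
    Fop n (fun ρ => a * Lam ρ) r =
      (2*a*((n:ℝ)-1)*Lam r + a*((n:ℝ)-1)*(1-2*a)*(Lam r)^2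
        - 2*a^2*(Lam r)^3 + (3/2)*a^2*(Lam r)^4) / r^2 := by
  have hd1 : deriv (fun ρ => a * Lam ρ) = fun x => a * deriv Lam x :=
    funext fun x => deriv_const_mul_field a
  have hdv : deriv (fun ρ => a * Lam ρ) r = a * ((Lam r)^2 / r) := by
    simp only [hd1]; rw [(lam_hasDeriv h0 h1).deriv]
  have hdv2 : deriv (deriv (fun ρ => a * Lam ρ)) r
      = a * ((2*(Lam r)^3 - (Lam r)^2)/r^2) := by
    simp only [hd1]; rw [deriv_const_mul_field, (lam_deriv2 h0 h1).deriv]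
  rw [Fop, hdv2, hdv]
  have hr : r ≠ 0 := ne_of_gt h0
  field_simp
  ring

lemma negLog_atTop : Tendsto (fun t : ℝ => -Real.log t) (nhdsWithin 0 (Ioi 0)) atTop :=
  tendsto_neg_atBot_atTop.comp Real.tendsto_log_nhdsGT_zero

lemma halfL_atTop (c : ℝ) :
    Tendsto (fun t : ℝ => -Real.log t / 2 - c) (nhdsWithin 0 (Ioi 0)) atTop :=
  tendsto_atTop_add_const_right _ (-c) (negLog_atTop.atTop_div_const two_pos)

lemma lam_rho_eq (ρ : ℝ) (hρ : 0 < ρ) {t : ℝ} (ht : 0 < t) :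
    Lam (ρ * Real.sqrt t) = (-Real.log t / 2 - Real.log ρ)⁻¹ := by
  have hst : Real.sqrt t ≠ 0 := by positivity
  rw [Lam, Real.log_mul (ne_of_gt hρ) hst, Real.log_sqrt ht.le, one_div]
  ring_nf

lemma lam_rho_tendsto (ρ : ℝ) (hρ : 0 < ρ) :
    Tendsto (fun t : ℝ => Lam (ρ * Real.sqrt t)) (nhdsWithin 0 (Ioi 0)) (nhds 0) := by
  have h1 : (fun t : ℝ => (-Real.log t / 2 - Real.log ρ)⁻¹)
      =ᶠ[nhdsWithin (0:ℝ) (Ioi 0)] (fun t => Lam (ρ * Real.sqrt t)) := by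
    filter_upwards [self_mem_nhdsWithin] with t ht
    exact (lam_rho_eq ρ hρ ht).symm
  exact Tendsto.congr' h1 (halfL_atTop (Real.log ρ)).inv_tendsto_atTop

lemma lam_mul_tendsto (ρ : ℝ) (hρ : 0 < ρ) :
    Tendsto (fun t : ℝ => (-Real.log t) * Lam (ρ * Real.sqrt t))
      (nhdsWithin 0 (Ioi 0)) (nhds 2) := by
  have hbig : ∀ᶠ t in nhdsWithin (0:ℝ) (Ioi 0),
      (1:ℝ) < -Real.log t / 2 - Real.log ρ :=
    (halfL_atTop (Real.log ρ)).eventually_gt_atTop _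
  have h1 : (fun t : ℝ => 2 + 2 * Real.log ρ / (-Real.log t / 2 - Real.log ρ))
      =ᶠ[nhdsWithin (0:ℝ) (Ioi 0)]
      (fun t => (-Real.log t) * Lam (ρ * Real.sqrt t)) := by
    filter_upwards [self_mem_nhdsWithin, hbig] with t ht hb
    have ht' : (0:ℝ) < t := ht
    have hne : -Real.log t / 2 - Real.log ρ ≠ 0 := by
      intro h; rw [h] at hb; norm_num at hb
    rw [lam_rho_eq ρ hρ ht', ← div_eq_mul_inv, eq_div_iff hne, add_mul,
      div_mul_cancel₀ _ hne]
    ring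
  refine Tendsto.congr' h1 ?_
  have h2 : Tendsto (fun t : ℝ => 2 * Real.log ρ / (-Real.log t / 2 - Real.log ρ))
      (nhdsWithin 0 (Ioi 0)) (nhds 0) := by
    simpa [div_eq_mul_inv] using
      ((halfL_atTop (Real.log ρ)).inv_tendsto_atTop.const_mul (2 * Real.log ρ))
  simpa using (tendsto_const_nhds.add h2 :
    Tendsto (fun t : ℝ => 2 + 2 * Real.log ρ / (-Real.log t / 2 - Real.log ρ)) _ (nhds (2 + 0)))

lemma inv_negLog_tendsto :
    Tendsto (fun t : ℝ => 1 / (-Real.log t)) (nhdsWithin 0 (Ioi 0)) (nhds 0) := by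
  exact negLog_atTop.inv_tendsto_atTop.congr (fun t => by simp only [Pi.inv_apply, one_div])

lemma key_tendsto (n : ℕ) (a ε γ B ρ : ℝ) (hρ : 0 < ρ) :
    Tendsto (fun t : ℝ => (-Real.log t) *
        (vParSub n γ B (ρ * Real.sqrt t) t - vOuter n a (1-ε) (ρ * Real.sqrt t) t))
      (nhdsWithin 0 (Ioi 0))
      (nhds ((1-γ) * W0 n ρ - 2*a - 4*a*(1-ε)*((n:ℝ)-1)/ρ^2)) := by
  have hsmall : ∀ᶠ t in nhdsWithin (0:ℝ) (Ioi 0), ρ * Real.sqrt t < 1 := by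
    have hc : Tendsto (fun t : ℝ => ρ * Real.sqrt t) (nhdsWithin (0:ℝ) (Ioi 0)) (nhds 0) := by
      have h := (Real.continuous_sqrt.tendsto' 0 0 (by simp)).mono_left
        (nhdsWithin_le_nhds (s := Ioi (0:ℝ)))
      simpa using h.const_mul ρ
    exact hc.eventually_lt_const (by norm_num : (0:ℝ) < 1)
  have hLbig : ∀ᶠ t in nhdsWithin (0:ℝ) (Ioi 0), (1:ℝ) < -Real.log t :=
    negLog_atTop.eventually_gt_atTop _
  have hid : (fun t : ℝ =>
        ((1-γ) * W0 n ρ - B^2/ρ^4 * (1/(-Real.log t)))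
        - a * ((-Real.log t) * Lam (ρ * Real.sqrt t))
        - (1-ε)/ρ^2 * (2*a*((n:ℝ)-1) * ((-Real.log t) * Lam (ρ * Real.sqrt t))
            + a*((n:ℝ)-1)*(1-2*a) * Lam (ρ * Real.sqrt t) * ((-Real.log t) * Lam (ρ * Real.sqrt t))
            - 2*a^2 * (Lam (ρ * Real.sqrt t))^2 * ((-Real.log t) * Lam (ρ * Real.sqrt t))
            + (3/2)*a^2 * (Lam (ρ * Real.sqrt t))^3 * ((-Real.log t) * Lam (ρ * Real.sqrt t))))
      =ᶠ[nhdsWithin (0:ℝ) (Ioi 0)]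
      (fun t => (-Real.log t) *
        (vParSub n γ B (ρ * Real.sqrt t) t - vOuter n a (1-ε) (ρ * Real.sqrt t) t)) := by
    filter_upwards [self_mem_nhdsWithin, hsmall, hLbig] with t ht hs hL
    have ht' : (0:ℝ) < t := ht
    have hst : (0:ℝ) < Real.sqrt t := Real.sqrt_pos.mpr ht'
    have hr0 : 0 < ρ * Real.sqrt t := by positivity
    have hLne : -Real.log t ≠ 0 := by intro h; rw [h] at hL; norm_num at hL
    have hdiv : ρ * Real.sqrt t / Real.sqrt t = ρ := by field_simp
    have hρne : ρ ≠ 0 := ne_of_gt hρ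
    have hstne : Real.sqrt t ≠ 0 := ne_of_gt hst
    rw [vParSub, vOuter, Fop_aLam n a hr0 hs, hdiv]
    set L := -Real.log t with hLdef
    set s := Real.sqrt t with hsdef
    set lam := Lam (ρ * s) with hlamdef
    have hsq2 : s^2 = t := Real.sq_sqrt ht'.le
    rw [← hsq2]
    field_simp
    ring
  refine Tendsto.congr' hid ?_
  have hμ := lam_mul_tendsto ρ hρ
  have hl := lam_rho_tendsto ρ hρ
  have hs := inv_negLog_tendsto
  have hfinal : Tendsto (fun t : ℝ =>
        ((1-γ) * W0 n ρ - B^2/ρ^4 * (1/(-Real.log t)))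
        - a * ((-Real.log t) * Lam (ρ * Real.sqrt t))
        - (1-ε)/ρ^2 * (2*a*((n:ℝ)-1) * ((-Real.log t) * Lam (ρ * Real.sqrt t))
            + a*((n:ℝ)-1)*(1-2*a) * Lam (ρ * Real.sqrt t) * ((-Real.log t) * Lam (ρ * Real.sqrt t))
            - 2*a^2 * (Lam (ρ * Real.sqrt t))^2 * ((-Real.log t) * Lam (ρ * Real.sqrt t))
            + (3/2)*a^2 * (Lam (ρ * Real.sqrt t))^3 * ((-Real.log t) * Lam (ρ * Real.sqrt t))))
      (nhdsWithin (0:ℝ) (Ioi 0))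
      (nhds (((1-γ) * W0 n ρ - B^2/ρ^4 * 0) - a * 2
        - (1-ε)/ρ^2 * (2*a*((n:ℝ)-1) * 2 + a*((n:ℝ)-1)*(1-2*a) * 0 * 2
            - 2*a^2 * 0^2 * 2 + (3/2)*a^2 * 0^3 * 2))) := by
    refine Tendsto.sub (Tendsto.sub (Tendsto.sub tendsto_const_nhds
      (tendsto_const_nhds.mul hs)) (tendsto_const_nhds.mul hμ))
      (tendsto_const_nhds.mul ?_)
    exact ((Tendsto.add (tendsto_const_nhds.mul hμ)
      ((tendsto_const_nhds.mul hl).mul hμ)).sub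
      ((tendsto_const_nhds.mul (hl.pow 2)).mul hμ)).add
      ((tendsto_const_nhds.mul (hl.pow 3)).mul hμ)
  have heq : ((1-γ) * W0 n ρ - 2*a - 4*a*(1-ε)*((n:ℝ)-1)/ρ^2)
      = (((1-γ) * W0 n ρ - B^2/ρ^4 * 0) - a * 2
        - (1-ε)/ρ^2 * (2*a*((n:ℝ)-1) * 2 + a*((n:ℝ)-1)*(1-2*a) * 0 * 2
            - 2*a^2 * 0^2 * 2 + (3/2)*a^2 * 0^3 * 2)) := by ring
  rw [heq]
  exact hfinal

set_option maxHeartbeats 2000000 in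
/-- Gluing the outer and parabolic subsolutions: with `ρ_* = A/√ε` and
`γ = δ + (1-δ)ε²/(ε + 2A²/(n-1))`, for small `t` one has
`v_par⁻ > v_out⁻` at `r = ρ_*√t` and `v_par⁻ < v_out⁻` at `r = 3ρ_*√t`. -/
theorem stmt8 (n : ℕ) (hn : 2 ≤ n) (A B : ℝ) (hA : 0 < A) (hB : 0 < B) :
    ∃ ε₀ > (0:ℝ), ∃ δ₀ > (0:ℝ), ∀ ε δ : ℝ, 0 < ε → ε < ε₀ → 0 < δ → δ < δ₀ →
      ∃ tstar ∈ Ioo (0:ℝ) (Real.exp (-1)), ∀ t : ℝ, 0 < t → t < tstar →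
        vOuter n ((1 - δ) * ((n:ℝ) - 1) / 4) (1 - ε)
            (A / Real.sqrt ε * Real.sqrt t) t <
          vParSub n (δ + (1 - δ) * ε^2 / (ε + 2 * A^2 / ((n:ℝ) - 1))) B
            (A / Real.sqrt ε * Real.sqrt t) t ∧
        vParSub n (δ + (1 - δ) * ε^2 / (ε + 2 * A^2 / ((n:ℝ) - 1))) B
            (3 * (A / Real.sqrt ε) * Real.sqrt t) t <
          vOuter n ((1 - δ) * ((n:ℝ) - 1) / 4) (1 - ε)
            (3 * (A / Real.sqrt ε) * Real.sqrt t) t := by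
  refine ⟨1, one_pos, 1, one_pos, ?_⟩
  intro ε δ hε hε1 hδ hδ1
  have hn1 : (1:ℝ) ≤ (n:ℝ) - 1 := by
    have : (2:ℝ) ≤ (n:ℝ) := by exact_mod_cast hn
    linarith
  have hnn : (0:ℝ) < (n:ℝ) - 1 := by linarith
  have hm : (0:ℝ) < 2*A^2/((n:ℝ)-1) := by positivity
  have hεm : (0:ℝ) < ε + 2*A^2/((n:ℝ)-1) := by linarith
  have h1δ : (0:ℝ) < 1 - δ := by linarith
  have hsε : (0:ℝ) < Real.sqrt ε := Real.sqrt_pos.mpr hε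
  have hρ1 : (0:ℝ) < A / Real.sqrt ε := by positivity
  have hρ3 : (0:ℝ) < 3 * (A / Real.sqrt ε) := by positivity
  have hsε2 : Real.sqrt ε ^ 2 = ε := Real.sq_sqrt hε.le
  have hρ1sq : (A / Real.sqrt ε)^2 = A^2 / ε := by rw [div_pow, hsε2]
  have hρ3sq : (3 * (A / Real.sqrt ε))^2 = 9 * A^2 / ε := by
    rw [mul_pow, div_pow, hsε2]; ring
  set γ : ℝ := δ + (1-δ)*ε^2/(ε + 2*A^2/((n:ℝ)-1)) with hγ_def
  set a : ℝ := (1-δ)*((n:ℝ)-1)/4 with ha_def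
  have hA' : A ≠ 0 := ne_of_gt hA
  have hεm' : ε + 2*A^2/((n:ℝ)-1) ≠ 0 := ne_of_gt hεm
  have hc1 : (1-γ) * W0 n (A / Real.sqrt ε) - 2*a
      - 4*a*(1-ε)*((n:ℝ)-1)/(A / Real.sqrt ε)^2
      = 3*(1-δ)*((n:ℝ)-1)*ε^2/(2*(ε + 2*A^2/((n:ℝ)-1))) := by
    rw [W0, hρ1sq, hγ_def, ha_def]
    field_simp
    ring
  have hc3 : (1-γ) * W0 n (3*(A / Real.sqrt ε)) - 2*a
      - 4*a*(1-ε)*((n:ℝ)-1)/(3*(A / Real.sqrt ε))^2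
      = -(5*(1-δ)*((n:ℝ)-1)*ε^2/(18*(ε + 2*A^2/((n:ℝ)-1)))) := by
    rw [W0, hρ3sq, hγ_def, ha_def]
    field_simp
    ring
  have hc1pos : (0:ℝ) < (1-γ) * W0 n (A / Real.sqrt ε) - 2*a
      - 4*a*(1-ε)*((n:ℝ)-1)/(A / Real.sqrt ε)^2 := by
    rw [hc1]
    apply div_pos
    · have := mul_pos (mul_pos h1δ hnn) (pow_pos hε 2)
      nlinarith
    · linarith
  have hc3neg : (1-γ) * W0 n (3*(A / Real.sqrt ε)) - 2*a
      - 4*a*(1-ε)*((n:ℝ)-1)/(3*(A / Real.sqrt ε))^2 < 0 := by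
    rw [hc3]
    have : (0:ℝ) < 5*(1-δ)*((n:ℝ)-1)*ε^2/(18*(ε + 2*A^2/((n:ℝ)-1))) := by
      apply div_pos
      · have := mul_pos (mul_pos h1δ hnn) (pow_pos hε 2)
        nlinarith
      · linarith
    linarith
  have E1 : ∀ᶠ t in nhdsWithin (0:ℝ) (Ioi 0),
      0 < (-Real.log t) * (vParSub n γ B ((A / Real.sqrt ε) * Real.sqrt t) t
        - vOuter n a (1-ε) ((A / Real.sqrt ε) * Real.sqrt t) t) :=
    (key_tendsto n a ε γ B (A / Real.sqrt ε) hρ1).eventually (eventually_gt_nhds hc1pos)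
  have E3 : ∀ᶠ t in nhdsWithin (0:ℝ) (Ioi 0),
      (-Real.log t) * (vParSub n γ B ((3 * (A / Real.sqrt ε)) * Real.sqrt t) t
        - vOuter n a (1-ε) ((3 * (A / Real.sqrt ε)) * Real.sqrt t) t) < 0 :=
    (key_tendsto n a ε γ B (3 * (A / Real.sqrt ε)) hρ3).eventually (eventually_lt_nhds hc3neg)
  have EL : ∀ᶠ t in nhdsWithin (0:ℝ) (Ioi 0), (0:ℝ) < -Real.log t :=
    negLog_atTop.eventually_gt_atTop _
  have EV : ∀ᶠ t in nhdsWithin (0:ℝ) (Ioi 0),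
      (vOuter n a (1-ε) ((A / Real.sqrt ε) * Real.sqrt t) t
          < vParSub n γ B ((A / Real.sqrt ε) * Real.sqrt t) t ∧
        vParSub n γ B ((3 * (A / Real.sqrt ε)) * Real.sqrt t) t
          < vOuter n a (1-ε) ((3 * (A / Real.sqrt ε)) * Real.sqrt t) t) := by
    filter_upwards [E1, E3, EL] with t h1 h3 hL
    constructor <;> nlinarith
  rcases mem_nhdsGT_iff_exists_Ioo_subset.mp EV with ⟨u, hu, hsub⟩
  have hu' : (0:ℝ) < u := hu
  refine ⟨min u (Real.exp (-1)) / 2, ⟨by positivity, ?_⟩, ?_⟩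
  · have h1 := min_le_right u (Real.exp (-1))
    have h2 := Real.exp_pos (-1)
    linarith
  · intro t ht htu
    have h1 := min_le_left u (Real.exp (-1))
    have : t ∈ Ioo 0 u := ⟨ht, by linarith⟩
    exact hsub this
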